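/- Suppose κ : ℝ → ℝ^{2n} is differentiable with κ'(t) = A0 κ(t) + θ2 w(t) + θ1 (F_v(t) − F_p'(t)) for all t, where w : ℝ → ℝ^n is continuous and F_p, F_v : ℝ → ℝ^n are continuously differentiable. Then for every t ≥ 0, κ(t) = exp(t A0) (κ(0) + θ1 F_p(0) + θ2 F_v(0)) + ∫₀ᵗ exp((t−s) A0) θ2 w(s) ds + ∫₀ᵗ exp((t−s) A0) θ2 (F_v'(s) − α_p F_p(s) − α_v F_v(s)) ds − θ1 F_p(t) − θ2 F_v(t). -/

import Mathlib

open Matrix intervalIntegral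

noncomputable section

/-- `θ1 = [I_n; 0]` as a `2n × n` real matrix (rows indexed by `Fin n ⊕ Fin n`). -/
def theta1 (n : ℕ) : Matrix (Fin n ⊕ Fin n) (Fin n) ℝ :=
  Matrix.of (Sum.elim (fun i j => (1 : Matrix (Fin n) (Fin n) ℝ) i j) (fun _ _ => 0))

/-- `θ2 = [0; I_n]` as a `2n × n` real matrix. -/
def theta2 (n : ℕ) : Matrix (Fin n ⊕ Fin n) (Fin n) ℝ :=
  Matrix.of (Sum.elim (fun _ _ => 0) (fun i j => (1 : Matrix (Fin n) (Fin n) ℝ) i j))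

/-- `α = [α_p I_n, α_v I_n]` as an `n × 2n` real matrix. -/
def alphaMat (n : ℕ) (αp αv : ℝ) : Matrix (Fin n) (Fin n ⊕ Fin n) ℝ :=
  Matrix.of fun i => Sum.elim (fun j => αp * (1 : Matrix (Fin n) (Fin n) ℝ) i j)
    (fun j => αv * (1 : Matrix (Fin n) (Fin n) ℝ) i j)

/-- `A0 = θ1 θ2ᵀ + θ2 [α_p I_n, α_v I_n]`, i.e. the block matrix
`[[0, I_n], [α_p I_n, α_v I_n]]`. -/
def A0 (n : ℕ) (αp αv : ℝ) : Matrix (Fin n ⊕ Fin n) (Fin n ⊕ Fin n) ℝ :=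
  theta1 n * (theta2 n)ᵀ + theta2 n * alphaMat n αp αv

/-! ### Auxiliary material -/

attribute [local instance] Matrix.linftyOpNormedRing Matrix.linftyOpNormedAlgebra

set_option linter.unnecessarySeqFocus false

abbrev Vecn (n : ℕ) := (Fin n ⊕ Fin n) → ℝ
abbrev Matn (n : ℕ) := Matrix (Fin n ⊕ Fin n) (Fin n ⊕ Fin n) ℝ

/-- `mulVec` as a linear map in the matrix argument. -/
def mvL (n : ℕ) : Matn n →ₗ[ℝ] (Vecn n →L[ℝ] Vecn n) where
  toFun M := LinearMap.toContinuousLinearMap M.mulVecLin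
  map_add' M N := by ext v i; simp [Matrix.add_mulVec]
  map_smul' c M := by ext v i; simp [Matrix.smul_mulVec]

/-- `mulVec` as a continuous linear map in the matrix argument. -/
def mvCLM (n : ℕ) : Matn n →L[ℝ] (Vecn n →L[ℝ] Vecn n) :=
  LinearMap.toContinuousLinearMap (mvL n)

@[simp] lemma mvCLM_apply {n : ℕ} (M : Matn n) (v : Vecn n) : mvCLM n M v = M.mulVec v := rfl

/-- `mulVec` by a fixed `2n × n` matrix, as a continuous linear map. -/
def mv2 {n : ℕ} (M : Matrix (Fin n ⊕ Fin n) (Fin n) ℝ) : (Fin n → ℝ) →L[ℝ] Vecn n :=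
  LinearMap.toContinuousLinearMap M.mulVecLin

@[simp] lemma mv2_apply {n : ℕ} (M : Matrix (Fin n ⊕ Fin n) (Fin n) ℝ) (v : Fin n → ℝ) :
    mv2 M v = M.mulVec v := rfl

lemma A0_mul_theta1 (n : ℕ) (αp αv : ℝ) : A0 n αp αv * theta1 n = αp • theta2 n := by
  ext i j
  cases i <;>
    simp [A0, theta1, theta2, alphaMat, Matrix.mul_apply, Fintype.sum_sum_type,
      Matrix.one_apply, Finset.mul_sum, apply_ite, Finset.sum_ite_eq'] <;>
    split_ifs <;> simp_all [eq_comm]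

lemma A0_mul_theta2 (n : ℕ) (αp αv : ℝ) : A0 n αp αv * theta2 n = theta1 n + αv • theta2 n := by
  ext i j
  cases i <;>
    simp [A0, theta1, theta2, alphaMat, Matrix.mul_apply, Fintype.sum_sum_type,
      Matrix.one_apply, Finset.mul_sum, apply_ite, Finset.sum_ite_eq'] <;>
    split_ifs <;> simp_all [eq_comm]

/-- variation-of-constants formula for the formation-agreement
dynamics, Theorem 1 of the paper: if `κ' = A0 κ + θ2 w + θ1 (F_v - F_p')` with `w`
continuous and `F_p, F_v` continuously differentiable, then for `t ≥ 0`,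
`κ t = exp (t A0) (κ 0 + θ1 F_p 0 + θ2 F_v 0)
      + ∫₀ᵗ exp ((t-s) A0) θ2 (w s) ds
      + ∫₀ᵗ exp ((t-s) A0) θ2 (F_v' s - α_p F_p s - α_v F_v s) ds
      - θ1 F_p t - θ2 F_v t`. -/
theorem formation_center_decomposition
    (n : ℕ) (hn : 1 ≤ n) (αp αv : ℝ)
    (κ : ℝ → ((Fin n ⊕ Fin n) → ℝ))
    (w : ℝ → (Fin n → ℝ)) (Fp Fv : ℝ → (Fin n → ℝ))
    (hw : Continuous w)
    (hFp : ContDiff ℝ 1 Fp) (hFv : ContDiff ℝ 1 Fv)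
    (hκ : ∀ t : ℝ, HasDerivAt κ
      ((A0 n αp αv).mulVec (κ t) + (theta2 n).mulVec (w t)
        + (theta1 n).mulVec (Fv t - deriv Fp t)) t) :
    ∀ t : ℝ, 0 ≤ t →
      κ t = (NormedSpace.exp (t • A0 n αp αv)).mulVec
              (κ 0 + (theta1 n).mulVec (Fp 0) + (theta2 n).mulVec (Fv 0))
        + (∫ s in (0:ℝ)..t, (NormedSpace.exp ((t - s) • A0 n αp αv)).mulVec
              ((theta2 n).mulVec (w s)))
        + (∫ s in (0:ℝ)..t, (NormedSpace.exp ((t - s) • A0 n αp αv)).mulVec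
              ((theta2 n).mulVec (deriv Fv s - αp • Fp s - αv • Fv s)))
        - (theta1 n).mulVec (Fp t) - (theta2 n).mulVec (Fv t) := by
  intro t ht
  set A : Matn n := A0 n αp αv with hA
  set y : ℝ → Vecn n := fun s => κ s + (theta1 n).mulVec (Fp s) + (theta2 n).mulVec (Fv s)
    with hy
  set g : ℝ → Vecn n := fun s => (theta2 n).mulVec (w s)
      + (theta2 n).mulVec (deriv Fv s - αp • Fp s - αv • Fv s) with hgdef
  -- derivatives of Fp, Fv
  have hFpd : ∀ s : ℝ, HasDerivAt Fp (deriv Fp s) s := fun s =>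
    ((hFp.differentiable one_ne_zero) s).hasDerivAt
  have hFvd : ∀ s : ℝ, HasDerivAt Fv (deriv Fv s) s := fun s =>
    ((hFv.differentiable one_ne_zero) s).hasDerivAt
  -- derivative of y
  have hy' : ∀ s : ℝ, HasDerivAt y (A.mulVec (y s) + g s) s := by
    intro s
    have h1 : HasDerivAt (fun u => (theta1 n).mulVec (Fp u))
        ((theta1 n).mulVec (deriv Fp s)) s :=
      ((mv2 (theta1 n)).hasFDerivAt.comp_hasDerivAt s (hFpd s))
    have h2 : HasDerivAt (fun u => (theta2 n).mulVec (Fv u))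
        ((theta2 n).mulVec (deriv Fv s)) s :=
      ((mv2 (theta2 n)).hasFDerivAt.comp_hasDerivAt s (hFvd s))
    have h3 := ((hκ s).add h1).add h2
    refine h3.congr_deriv ?_
    have e1 : A.mulVec ((theta1 n).mulVec (Fp s)) = αp • (theta2 n).mulVec (Fp s) := by
      rw [Matrix.mulVec_mulVec, hA, A0_mul_theta1, Matrix.smul_mulVec]
    have e2 : A.mulVec ((theta2 n).mulVec (Fv s)) =
        (theta1 n).mulVec (Fv s) + αv • (theta2 n).mulVec (Fv s) := by
      rw [Matrix.mulVec_mulVec, hA, A0_mul_theta2, Matrix.add_mulVec,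
        Matrix.smul_mulVec]
    simp only [hy, hgdef, Matrix.mulVec_add, Matrix.mulVec_sub, Matrix.mulVec_smul, e1, e2]
    abel
  -- commutation facts and the group property of the exponential
  have hexp_mul : ∀ a b : ℝ, NormedSpace.exp ((a + b) • A)
      = NormedSpace.exp (a • A) * NormedSpace.exp (b • A) := by
    intro a b
    rw [add_smul]
    exact NormedSpace.exp_add_of_commute (((Commute.refl A).smul_left a).smul_right b)
  have hinv : ∀ a : ℝ, NormedSpace.exp (a • A) * NormedSpace.exp ((-a) • A) = 1 := by
    intro a
    rw [← hexp_mul, add_neg_cancel, zero_smul, NormedSpace.exp_zero]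
  -- derivative of s ↦ exp((-s) • A)
  have hE : ∀ s : ℝ, HasDerivAt (fun u : ℝ => NormedSpace.exp ((-u) • A))
      (-(A * NormedSpace.exp ((-s) • A))) s := by
    intro s
    have h0 : HasDerivAt (fun u : ℝ => NormedSpace.exp (u • A))
        (A * NormedSpace.exp ((-s) • A)) (-s) := hasDerivAt_exp_smul_const' A (-s)
    have := h0.scomp s (hasDerivAt_neg s)
    simp only [Function.comp_def, neg_smul, one_smul] at this ⊢
    exact this
  -- derivative of z := s ↦ exp((-s) • A) *ᵥ (y s)
  have hz : ∀ s : ℝ, HasDerivAt (fun u : ℝ => (NormedSpace.exp ((-u) • A)).mulVec (y u))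
      ((NormedSpace.exp ((-s) • A)).mulVec (g s)) s := by
    intro s
    have hc : HasDerivAt (fun u : ℝ => mvCLM n (NormedSpace.exp ((-u) • A)))
        (mvCLM n (-(A * NormedSpace.exp ((-s) • A)))) s :=
      (mvCLM n).hasFDerivAt.comp_hasDerivAt s (hE s)
    have := hc.clm_apply (hy' s)
    simp only [mvCLM_apply] at this
    refine this.congr_deriv ?_
    have hcomm : NormedSpace.exp ((-s) • A) * A = A * NormedSpace.exp ((-s) • A) :=
      (((Commute.refl A).smul_left (-s)).exp_left).symm.eq.symm ▸
        ((((Commute.refl A).smul_left (-s)).exp_left).eq)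
    have e3 : (NormedSpace.exp ((-s) • A)).mulVec (A.mulVec (y s))
        = (A * NormedSpace.exp ((-s) • A)).mulVec (y s) := by
      rw [Matrix.mulVec_mulVec, hcomm]
    simp only [Matrix.mulVec_add, Matrix.neg_mulVec, e3]
    abel
  -- continuity facts
  have hEc : ∀ c : ℝ, Continuous (fun s : ℝ => NormedSpace.exp ((c - s) • A)) := by
    intro c
    exact NormedSpace.exp_continuous.comp (((continuous_const.sub continuous_id).smul
      continuous_const))
  have hgc : Continuous g := by
    have hdFv : Continuous (deriv Fv) := (hFv.continuous_deriv le_rfl)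
    exact ((mv2 (theta2 n)).continuous.comp hw).add
      ((mv2 (theta2 n)).continuous.comp
        (((hdFv.sub (hFp.continuous.const_smul αp)).sub
          (hFv.continuous.const_smul αv))))
  have hintc : Continuous fun s : ℝ => (NormedSpace.exp ((-s) • A)).mulVec (g s) := by
    have : Continuous fun s : ℝ => mvCLM n (NormedSpace.exp ((-s) • A)) :=
      (mvCLM n).continuous.comp
        (NormedSpace.exp_continuous.comp ((continuous_neg).smul continuous_const))
    exact this.clm_apply hgc
  -- FTC
  have hftc : (∫ s in (0:ℝ)..t, (NormedSpace.exp ((-s) • A)).mulVec (g s))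
      = (NormedSpace.exp ((-t) • A)).mulVec (y t)
        - (NormedSpace.exp ((-(0:ℝ)) • A)).mulVec (y 0) :=
    intervalIntegral.integral_eq_sub_of_hasDerivAt (fun s _ => hz s)
      (hintc.intervalIntegrable 0 t)
  have hz0 : (NormedSpace.exp ((-(0:ℝ)) • A)).mulVec (y 0) = y 0 := by
    simp [NormedSpace.exp_zero]
  -- recover y t
  have hyt : y t = (NormedSpace.exp (t • A)).mulVec (y 0)
      + (NormedSpace.exp (t • A)).mulVec
          (∫ s in (0:ℝ)..t, (NormedSpace.exp ((-s) • A)).mulVec (g s)) := by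
    rw [hftc, hz0, Matrix.mulVec_sub, Matrix.mulVec_mulVec, hinv, Matrix.one_mulVec]
    abel
  -- move exp(t•A) inside the integral
  have hpull : (NormedSpace.exp (t • A)).mulVec
        (∫ s in (0:ℝ)..t, (NormedSpace.exp ((-s) • A)).mulVec (g s))
      = ∫ s in (0:ℝ)..t, (NormedSpace.exp ((t - s) • A)).mulVec (g s) := by
    have hii : IntervalIntegrable (fun s : ℝ => (NormedSpace.exp ((-s) • A)).mulVec (g s))
        MeasureTheory.volume 0 t := hintc.intervalIntegrable 0 t
    have hL := (mvCLM n (NormedSpace.exp (t • A))).intervalIntegral_comp_comm hii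
    simp only [mvCLM_apply] at hL
    rw [← hL]
    refine intervalIntegral.integral_congr fun s _ => ?_
    rw [Matrix.mulVec_mulVec, ← hexp_mul]
    norm_num [sub_eq_add_neg]
  -- split the integral
  have hsplit : (∫ s in (0:ℝ)..t, (NormedSpace.exp ((t - s) • A)).mulVec (g s))
      = (∫ s in (0:ℝ)..t, (NormedSpace.exp ((t - s) • A)).mulVec ((theta2 n).mulVec (w s)))
      + (∫ s in (0:ℝ)..t, (NormedSpace.exp ((t - s) • A)).mulVec
          ((theta2 n).mulVec (deriv Fv s - αp • Fp s - αv • Fv s))) := by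
    have hc1 : Continuous fun s : ℝ =>
        (NormedSpace.exp ((t - s) • A)).mulVec ((theta2 n).mulVec (w s)) := by
      have : Continuous fun s : ℝ => mvCLM n (NormedSpace.exp ((t - s) • A)) :=
        (mvCLM n).continuous.comp (hEc t)
      exact this.clm_apply ((mv2 (theta2 n)).continuous.comp hw)
    have hc2 : Continuous fun s : ℝ =>
        (NormedSpace.exp ((t - s) • A)).mulVec
          ((theta2 n).mulVec (deriv Fv s - αp • Fp s - αv • Fv s)) := by
      have h1 : Continuous fun s : ℝ => mvCLM n (NormedSpace.exp ((t - s) • A)) :=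
        (mvCLM n).continuous.comp (hEc t)
      exact h1.clm_apply ((mv2 (theta2 n)).continuous.comp
        (((hFv.continuous_deriv le_rfl).sub (hFp.continuous.const_smul αp)).sub
          (hFv.continuous.const_smul αv)))
    rw [← intervalIntegral.integral_add (hc1.intervalIntegrable 0 t)
      (hc2.intervalIntegrable 0 t)]
    refine intervalIntegral.integral_congr fun s _ => ?_
    simp [hgdef, Matrix.mulVec_add]
  -- conclude
  have hκt : κ t = y t - (theta1 n).mulVec (Fp t) - (theta2 n).mulVec (Fv t) := by
    simp only [hy]; abel
  rw [hκt, hyt, hpull, hsplit]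
  have hy0 : y 0 = κ 0 + (theta1 n).mulVec (Fp 0) + (theta2 n).mulVec (Fv 0) := rfl
  rw [hy0]
  abel

end
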